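/- Fully discrete Scharfetter-Gummel energy dissipation (generalized Keller-Segel): let K ∈ ℝ^{I×I} be symmetric and positive semidefinite, let G : ℝ → ℝ be convex and differentiable with G' = g, let Δt > 0, Δx = 1/I, let u^n, u^{n+1} ∈ ℝ^I, set v^n = K u^n, v^{n+1} = K u^{n+1}, and suppose that for some nonnegative reals c_{i+1/2} ≥ 0 (i = 1,...,I−1) one has u_i^{n+1} − u_i^n + (Δt/Δx)(F_{i+1/2} − F_{i−1/2}) = 0 for i = 1,...,I, where F_{1/2} = F_{I+1/2} = 0 and F_{i+1/2} = −(c_{i+1/2}/Δx)[ exp(g(u_{i+1}^{n+1}) − v_{i+1}^n) − exp(g(u_i^{n+1}) − v_i^n) ]. Then, writing x_i = g(u_i^{n+1}) − v_i^n and 𝔈^m = Δx Σ_{i=1}^I ( G(u_i^m) − (1/2) u_i^m v_i^m ), one has 𝔈^{n+1} − 𝔈^n ≤ −(Δt/Δx) Σ_{i=1}^{I−1} c_{i+1/2} ( exp(x_{i+1}) − exp(x_i) ) ( x_{i+1} − x_i ) ≤ 0. -/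

import Mathlib

open Finset

/-- Tangent line inequality for convex differentiable functions. -/
lemma sg_tangent_line_le {G g : ℝ → ℝ} (hGconv : ConvexOn ℝ Set.univ G)
    (hG : ∀ x : ℝ, HasDerivAt G (g x) x) (a b : ℝ) :
    G a - G b ≤ g a * (a - b) := by
  rcases lt_trichotomy a b with h | h | h
  · have h1 := hGconv.le_slope_of_hasDerivAt (Set.mem_univ a) (Set.mem_univ b) h (hG a)
    rw [slope_def_field] at h1
    have hb : (0:ℝ) < b - a := by linarith
    have h2 : g a * (b - a) ≤ G b - G a := by
      calc g a * (b - a) ≤ ((G b - G a) / (b - a)) * (b - a) :=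
            mul_le_mul_of_nonneg_right h1 hb.le
        _ = G b - G a := by field_simp
    nlinarith
  · subst h; simp
  · have h1 := hGconv.slope_le_of_hasDerivAt (Set.mem_univ b) (Set.mem_univ a) h (hG a)
    rw [slope_def_field] at h1
    have hb : (0:ℝ) < a - b := by linarith
    calc G a - G b = ((G a - G b) / (a - b)) * (a - b) := by field_simp
      _ ≤ g a * (a - b) := mul_le_mul_of_nonneg_right h1 hb.le

/-- Summation by parts on a range. -/
lemma sg_sum_by_parts (x F : ℕ → ℝ) (m : ℕ) :
    ∑ k ∈ Finset.range (m + 1), x (k + 1) * (F (k + 1) - F k)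
      = x (m + 1) * F (m + 1) - x 1 * F 0
        - ∑ k ∈ Finset.range m, (x (k + 2) - x (k + 1)) * F (k + 1) := by
  induction m with
  | zero => simp [Finset.sum_range_one, mul_sub]
  | succ m ih => rw [Finset.sum_range_succ, ih, Finset.sum_range_succ]; ring

/-- Monotonicity of exp gives nonnegativity of the dissipation terms. -/
lemma sg_exp_term_nonneg (a b : ℝ) : 0 ≤ (Real.exp b - Real.exp a) * (b - a) := by
  rcases le_total a b with h | h
  · exact mul_nonneg (sub_nonneg.mpr (Real.exp_le_exp.mpr h)) (sub_nonneg.mpr h)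
  · have h1 : Real.exp b ≤ Real.exp a := Real.exp_le_exp.mpr h
    nlinarith

/-- fully discrete Scharfetter-Gummel energy dissipation
(generalized Keller-Segel), with no restriction on the time step. -/
theorem fully_discrete_scharfetter_gummel_energy_dissipation
    (I : ℕ) (hI : 1 ≤ I) (Δt Δx : ℝ) (hΔt : 0 < Δt) (hΔx : Δx = 1 / (I : ℝ))
    (K : ℕ → ℕ → ℝ)
    (hKsym : ∀ i j, K i j = K j i)
    (hKpsd : ∀ w : ℕ → ℝ,
      0 ≤ ∑ i ∈ Finset.Icc 1 I, ∑ j ∈ Finset.Icc 1 I, K i j * w i * w j)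
    (G g : ℝ → ℝ)
    (hGconv : ConvexOn ℝ Set.univ G)
    (hG : ∀ x : ℝ, HasDerivAt G (g x) x)
    (un un1 vn vn1 : ℕ → ℝ)
    (hvn : ∀ i, vn i = ∑ j ∈ Finset.Icc 1 I, K i j * un j)
    (hvn1 : ∀ i, vn1 i = ∑ j ∈ Finset.Icc 1 I, K i j * un1 j)
    (c : ℕ → ℝ) (hc : ∀ i ∈ Finset.Icc 1 (I - 1), 0 ≤ c i)
    (F : ℕ → ℝ) (hF0 : F 0 = 0) (hFI : F I = 0)
    (hF : ∀ i ∈ Finset.Icc 1 (I - 1),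
      F i = -(c i / Δx) *
        (Real.exp (g (un1 (i + 1)) - vn (i + 1)) - Real.exp (g (un1 i) - vn i)))
    (hscheme : ∀ i ∈ Finset.Icc 1 I, un1 i - un i + (Δt / Δx) * (F i - F (i - 1)) = 0) :
    Δx * ∑ i ∈ Finset.Icc 1 I, (G (un1 i) - (1 / 2) * un1 i * vn1 i)
      - Δx * ∑ i ∈ Finset.Icc 1 I, (G (un i) - (1 / 2) * un i * vn i)
      ≤ -(Δt / Δx) * ∑ i ∈ Finset.Icc 1 (I - 1),
          c i * (Real.exp (g (un1 (i + 1)) - vn (i + 1)) - Real.exp (g (un1 i) - vn i))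
            * ((g (un1 (i + 1)) - vn (i + 1)) - (g (un1 i) - vn i))
    ∧ -(Δt / Δx) * ∑ i ∈ Finset.Icc 1 (I - 1),
          c i * (Real.exp (g (un1 (i + 1)) - vn (i + 1)) - Real.exp (g (un1 i) - vn i))
            * ((g (un1 (i + 1)) - vn (i + 1)) - (g (un1 i) - vn i)) ≤ 0 := by
  have hIR : (0:ℝ) < (I : ℝ) := by exact_mod_cast hI
  have hΔxpos : 0 < Δx := by rw [hΔx]; positivity
  have hΔxne : Δx ≠ 0 := ne_of_gt hΔxpos
  obtain ⟨m, rfl⟩ : ∃ m, I = m + 1 := ⟨I - 1, (Nat.succ_pred_eq_of_pos hI).symm⟩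
  simp only [Nat.add_sub_cancel] at hc hF ⊢
  -- abbreviation for the dissipation sum
  set S : ℝ := ∑ i ∈ Finset.Icc 1 m,
      c i * (Real.exp (g (un1 (i + 1)) - vn (i + 1)) - Real.exp (g (un1 i) - vn i))
        * ((g (un1 (i + 1)) - vn (i + 1)) - (g (un1 i) - vn i)) with hS
  -- Part 2: nonpositivity
  have hSnn : 0 ≤ S := by
    rw [hS]
    refine Finset.sum_nonneg fun i hi => ?_
    rw [mul_assoc]
    exact mul_nonneg (hc i hi) (sg_exp_term_nonneg _ _)
  have part2 : -(Δt / Δx) * S ≤ 0 := by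
    have : 0 ≤ (Δt / Δx) * S := mul_nonneg (div_nonneg hΔt.le hΔxpos.le) hSnn
    linarith
  refine ⟨?_, part2⟩
  -- Part 1
  -- convexity
  have hconv : ∑ i ∈ Finset.Icc 1 (m+1), (G (un1 i) - G (un i))
      ≤ ∑ i ∈ Finset.Icc 1 (m+1), g (un1 i) * (un1 i - un i) :=
    Finset.sum_le_sum fun i _ => sg_tangent_line_le hGconv hG _ _
  -- quadratic part via positive semidefiniteness
  have expand1 : ∑ i ∈ Finset.Icc 1 (m+1), un1 i * vn1 i
      = ∑ i ∈ Finset.Icc 1 (m+1), ∑ j ∈ Finset.Icc 1 (m+1), K i j * un1 i * un1 j := by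
    refine Finset.sum_congr rfl fun i _ => ?_
    rw [hvn1 i, Finset.mul_sum]
    exact Finset.sum_congr rfl fun j _ => by ring
  have expand2 : ∑ i ∈ Finset.Icc 1 (m+1), un i * vn i
      = ∑ i ∈ Finset.Icc 1 (m+1), ∑ j ∈ Finset.Icc 1 (m+1), K i j * un i * un j := by
    refine Finset.sum_congr rfl fun i _ => ?_
    rw [hvn i, Finset.mul_sum]
    exact Finset.sum_congr rfl fun j _ => by ring
  have expand3 : ∑ i ∈ Finset.Icc 1 (m+1), vn i * (un1 i - un i)
      = ∑ i ∈ Finset.Icc 1 (m+1), ∑ j ∈ Finset.Icc 1 (m+1),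
          K i j * un j * (un1 i - un i) := by
    refine Finset.sum_congr rfl fun i _ => ?_
    rw [hvn i, Finset.sum_mul]
  have hK : 0 ≤ ∑ i ∈ Finset.Icc 1 (m+1), ∑ j ∈ Finset.Icc 1 (m+1),
      K i j * (un1 i - un i) * (un1 j - un j) := hKpsd fun i => un1 i - un i
  have hswap : ∑ i ∈ Finset.Icc 1 (m+1), ∑ j ∈ Finset.Icc 1 (m+1),
          K i j * un j * (un1 i - un i)
      = ∑ i ∈ Finset.Icc 1 (m+1), ∑ j ∈ Finset.Icc 1 (m+1),
          K i j * un i * (un1 j - un j) := by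
    rw [Finset.sum_comm]
    exact Finset.sum_congr rfl fun i _ => Finset.sum_congr rfl fun j _ => by rw [hKsym]
  have key : ∑ i ∈ Finset.Icc 1 (m+1), ∑ j ∈ Finset.Icc 1 (m+1), K i j * un1 i * un1 j
        - ∑ i ∈ Finset.Icc 1 (m+1), ∑ j ∈ Finset.Icc 1 (m+1), K i j * un i * un j
      = (∑ i ∈ Finset.Icc 1 (m+1), ∑ j ∈ Finset.Icc 1 (m+1),
            K i j * (un1 i - un i) * (un1 j - un j))
        + (∑ i ∈ Finset.Icc 1 (m+1), ∑ j ∈ Finset.Icc 1 (m+1),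
            K i j * un i * (un1 j - un j))
        + (∑ i ∈ Finset.Icc 1 (m+1), ∑ j ∈ Finset.Icc 1 (m+1),
            K i j * un j * (un1 i - un i)) := by
    rw [← Finset.sum_sub_distrib, ← Finset.sum_add_distrib, ← Finset.sum_add_distrib]
    refine Finset.sum_congr rfl fun i _ => ?_
    rw [← Finset.sum_sub_distrib, ← Finset.sum_add_distrib, ← Finset.sum_add_distrib]
    exact Finset.sum_congr rfl fun j _ => by ring
  have hpsd : 2 * ∑ i ∈ Finset.Icc 1 (m+1), vn i * (un1 i - un i)
      ≤ ∑ i ∈ Finset.Icc 1 (m+1), un1 i * vn1 i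
        - ∑ i ∈ Finset.Icc 1 (m+1), un i * vn i := by
    rw [expand1, expand2, expand3, key]
    linarith [hK, hswap]
  -- split the energy sums
  have e1 : ∑ i ∈ Finset.Icc 1 (m+1), (G (un1 i) - 1 / 2 * un1 i * vn1 i)
      = (∑ i ∈ Finset.Icc 1 (m+1), G (un1 i))
        - 1 / 2 * ∑ i ∈ Finset.Icc 1 (m+1), un1 i * vn1 i := by
    rw [Finset.sum_sub_distrib, Finset.mul_sum]
    congr 1
    exact Finset.sum_congr rfl fun i _ => by ring
  have e2 : ∑ i ∈ Finset.Icc 1 (m+1), (G (un i) - 1 / 2 * un i * vn i)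
      = (∑ i ∈ Finset.Icc 1 (m+1), G (un i))
        - 1 / 2 * ∑ i ∈ Finset.Icc 1 (m+1), un i * vn i := by
    rw [Finset.sum_sub_distrib, Finset.mul_sum]
    congr 1
    exact Finset.sum_congr rfl fun i _ => by ring
  -- main inequality up to the intermediate sum
  have main1 : Δx * ∑ i ∈ Finset.Icc 1 (m+1), (G (un1 i) - 1 / 2 * un1 i * vn1 i)
        - Δx * ∑ i ∈ Finset.Icc 1 (m+1), (G (un i) - 1 / 2 * un i * vn i)
      ≤ Δx * ∑ i ∈ Finset.Icc 1 (m+1), (g (un1 i) - vn i) * (un1 i - un i) := by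
    rw [e1, e2]
    have hdiffsplit : ∑ i ∈ Finset.Icc 1 (m+1), (g (un1 i) - vn i) * (un1 i - un i)
        = (∑ i ∈ Finset.Icc 1 (m+1), g (un1 i) * (un1 i - un i))
          - ∑ i ∈ Finset.Icc 1 (m+1), vn i * (un1 i - un i) := by
      rw [← Finset.sum_sub_distrib]
      exact Finset.sum_congr rfl fun i _ => by ring
    have hGsplit : ∑ i ∈ Finset.Icc 1 (m+1), (G (un1 i) - G (un i))
        = (∑ i ∈ Finset.Icc 1 (m+1), G (un1 i))
          - ∑ i ∈ Finset.Icc 1 (m+1), G (un i) := Finset.sum_sub_distrib _ _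
    rw [hdiffsplit]
    have hcore : (∑ i ∈ Finset.Icc 1 (m+1), G (un1 i))
          - 1 / 2 * ∑ i ∈ Finset.Icc 1 (m+1), un1 i * vn1 i
          - ((∑ i ∈ Finset.Icc 1 (m+1), G (un i))
            - 1 / 2 * ∑ i ∈ Finset.Icc 1 (m+1), un i * vn i)
        ≤ (∑ i ∈ Finset.Icc 1 (m+1), g (un1 i) * (un1 i - un i))
          - ∑ i ∈ Finset.Icc 1 (m+1), vn i * (un1 i - un i) := by
      rw [hGsplit] at hconv
      linarith
    nlinarith [mul_le_mul_of_nonneg_left hcore hΔxpos.le]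
  -- scheme: express the increment via fluxes
  have hd : ∀ i ∈ Finset.Icc 1 (m+1),
      un1 i - un i = -(Δt / Δx) * (F i - F (i - 1)) := fun i hi => by
    have := hscheme i hi
    linarith
  -- summation by parts
  have hstep1 : ∑ i ∈ Finset.Icc 1 (m+1), (g (un1 i) - vn i) * (un1 i - un i)
      = -(Δt / Δx) * ∑ i ∈ Finset.Icc 1 (m+1),
          (g (un1 i) - vn i) * (F i - F (i - 1)) := by
    rw [Finset.mul_sum]
    refine Finset.sum_congr rfl fun i hi => ?_
    rw [hd i hi]; ring
  have habel : ∑ i ∈ Finset.Icc 1 (m+1), (g (un1 i) - vn i) * (F i - F (i - 1))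
      = - ∑ k ∈ Finset.range m,
          ((g (un1 (k + 2)) - vn (k + 2)) - (g (un1 (k + 1)) - vn (k + 1))) * F (k + 1) := by
    rw [← Finset.Ico_add_one_right_eq_Icc, Finset.sum_Ico_eq_sum_range]
    have hcard : m + 1 + 1 - 1 = m + 1 := by omega
    rw [hcard]
    have hterm : ∀ k, (g (un1 (1 + k)) - vn (1 + k)) * (F (1 + k) - F (1 + k - 1))
        = (g (un1 (k + 1)) - vn (k + 1)) * (F (k + 1) - F k) := by
      intro k
      have h1 : 1 + k = k + 1 := by omega
      rw [h1]
      rfl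
    rw [Finset.sum_congr rfl fun k _ => hterm k,
      sg_sum_by_parts (fun i => g (un1 i) - vn i) F m, hF0, hFI]
    ring
  -- convert the target sum to a range sum
  have htarget : S = ∑ k ∈ Finset.range m,
      c (k + 1) * (Real.exp (g (un1 (k + 2)) - vn (k + 2))
          - Real.exp (g (un1 (k + 1)) - vn (k + 1)))
        * ((g (un1 (k + 2)) - vn (k + 2)) - (g (un1 (k + 1)) - vn (k + 1))) := by
    rw [hS, ← Finset.Ico_add_one_right_eq_Icc, Finset.sum_Ico_eq_sum_range]
    have hcard : m + 1 - 1 = m := by omega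
    rw [hcard]
    refine Finset.sum_congr rfl fun k _ => ?_
    have h1 : 1 + k = k + 1 := by omega
    rw [h1]
  -- substitute the flux formula
  have hflux : ∀ k ∈ Finset.range m,
      F (k + 1) = -(c (k + 1) / Δx) *
        (Real.exp (g (un1 (k + 2)) - vn (k + 2))
          - Real.exp (g (un1 (k + 1)) - vn (k + 1))) := by
    intro k hk
    have hk' : k + 1 ∈ Finset.Icc 1 m := by
      simp only [Finset.mem_range] at hk
      simp only [Finset.mem_Icc]; omega
    have := hF (k + 1) hk'
    exact this
  have main2 : Δx * ∑ i ∈ Finset.Icc 1 (m+1), (g (un1 i) - vn i) * (un1 i - un i)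
      = -(Δt / Δx) * S := by
    rw [hstep1, habel, htarget]
    have hfact : Δx * (-(Δt / Δx) * (- ∑ k ∈ Finset.range m,
        ((g (un1 (k + 2)) - vn (k + 2)) - (g (un1 (k + 1)) - vn (k + 1))) * F (k + 1)))
        = Δt * ∑ k ∈ Finset.range m,
          ((g (un1 (k + 2)) - vn (k + 2)) - (g (un1 (k + 1)) - vn (k + 1))) * F (k + 1) := by
      field_simp
    rw [hfact, Finset.mul_sum, Finset.mul_sum]
    refine Finset.sum_congr rfl fun k hk => ?_
    rw [hflux k hk]
    ring
  calc Δx * ∑ i ∈ Finset.Icc 1 (m+1), (G (un1 i) - 1 / 2 * un1 i * vn1 i)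
        - Δx * ∑ i ∈ Finset.Icc 1 (m+1), (G (un i) - 1 / 2 * un i * vn i)
      ≤ Δx * ∑ i ∈ Finset.Icc 1 (m+1), (g (un1 i) - vn i) * (un1 i - un i) := main1
    _ = -(Δt / Δx) * S := main2
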